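/- For every m ≥ 0 and every fixed slope s ∈ {1, …, 2^m}, the family of digital lines {D_m(h,s) : h ∈ ℤ} is pairwise disjoint and its union equals the strip {(i,j) ∈ ℤ² : 1 ≤ j ≤ 2^m}; that is, the digital lines of a fixed slope partition the strip. -/

import Mathlib

/-- Digital lines of the ADRT, by recursion on the level `m`.
`DLine 0 h s = {(h,1)}`; at level `m+1`, the line of offset `h` and slope `s`
is the union of the level-`m` line `DLine m h (s/2)` (lower half) and the
level-`m` line `DLine m (h + s/2 + s%2) s` shifted up by `2^m` rows. -/
def DLine : ℕ → ℤ → ℕ → Finset (ℤ × ℤ)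
  | 0, h, _ => {(h, 1)}
  | m + 1, h, s =>
      DLine m h (s / 2) ∪
        (DLine m (h + (s / 2 : ℕ) + (s % 2 : ℕ)) s).image (fun p => (p.1, p.2 + 2 ^ m))

/-- Column offset of the unique point of a digital line in row `j`. -/
def Dc : ℕ → ℕ → ℤ → ℤ
  | 0, _, _ => 0
  | m + 1, s, j => if j ≤ 2 ^ m then Dc m (s / 2) j
      else (s / 2 : ℕ) + (s % 2 : ℕ) + Dc m s (j - 2 ^ m)

lemma mem_dline : ∀ (m : ℕ) (s : ℕ) (h : ℤ) (p : ℤ × ℤ),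
    p ∈ DLine m h s ↔ 1 ≤ p.2 ∧ p.2 ≤ 2 ^ m ∧ p.1 = h + Dc m s p.2 := by
  intro m
  induction m with
  | zero =>
    intro s h p
    simp only [DLine, Dc, Finset.mem_singleton, pow_zero, add_zero, Prod.ext_iff]
    omega
  | succ m ih =>
    intro s h p
    simp only [DLine, Finset.mem_union, Finset.mem_image, ih, Dc]
    constructor
    · rintro (⟨h1, h2, h3⟩ | ⟨q, ⟨h1, h2, h3⟩, hq⟩)
      · rw [if_pos h2]
        refine ⟨h1, ?_, h3⟩
        have hm : (0:ℤ) < 2 ^ m := by positivity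
        rw [pow_succ]; omega
      · obtain ⟨hq1, hq2⟩ : q.1 = p.1 ∧ q.2 + 2 ^ m = p.2 := Prod.mk_inj.mp hq
        have hm : (0:ℤ) < 2 ^ m := by positivity
        rw [if_neg (by omega)]
        refine ⟨by omega, by rw [pow_succ]; omega, ?_⟩
        have : p.2 - 2 ^ m = q.2 := by omega
        rw [this, ← hq1, h3]
        ring
    · rintro ⟨h1, h2, h3⟩
      by_cases hc : p.2 ≤ 2 ^ m
      · left
        rw [if_pos hc] at h3
        exact ⟨h1, hc, h3⟩
      · right
        rw [if_neg hc] at h3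
        refine ⟨(p.1, p.2 - 2 ^ m), ⟨?_, ?_, ?_⟩, by simp⟩
        · omega
        · rw [pow_succ] at h2; omega
        · rw [h3]; ring
  
/-- For a fixed slope `s ∈ {1,…,2^m}`, the digital lines `{D_m(h,s) : h ∈ ℤ}`
are pairwise disjoint and their union is the strip `{(i,j) : 1 ≤ j ≤ 2^m}`. -/
theorem dline_partition (m : ℕ) (s : ℕ) (hs1 : 1 ≤ s) (hs2 : s ≤ 2 ^ m) :
    (∀ h k : ℤ, h ≠ k → Disjoint (DLine m h s) (DLine m k s)) ∧
      (∀ p : ℤ × ℤ, (1 ≤ p.2 ∧ p.2 ≤ 2 ^ m) ↔ ∃ h : ℤ, p ∈ DLine m h s) := by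
  constructor
  · intro h k hne
    rw [Finset.disjoint_left]
    intro p hp hq
    rw [mem_dline] at hp hq
    exact hne (by omega)
  · intro p
    constructor
    · rintro ⟨h1, h2⟩
      exact ⟨p.1 - Dc m s p.2, (mem_dline m s _ p).mpr ⟨h1, h2, by ring⟩⟩
    · rintro ⟨h, hp⟩
      rw [mem_dline] at hp
      exact ⟨hp.1, hp.2.1⟩
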